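/- Let T ∈ B(H) be a norm limit of complex symmetric operators. Then σ_ap(T) = conj(σ_ap(T*)), and consequently σ(T) = σ_ap(T). -/

import Mathlib

open Filter Topology ContinuousLinearMap

def IsConjugation {H : Type*} [NormedAddCommGroup H] [InnerProductSpace ℂ H]
    (C : H → H) : Prop :=
  (∀ x y, C (x + y) = C x + C y) ∧
  (∀ (a : ℂ) (x : H), C (a • x) = (starRingEnd ℂ a) • C x) ∧
  (∀ x, ‖C x‖ = ‖x‖) ∧
  (∀ x, C (C x) = x)

def IsCSO {H : Type*} [NormedAddCommGroup H] [InnerProductSpace ℂ H]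
    [CompleteSpace H] (T : H →L[ℂ] H) : Prop :=
  ∃ C : H → H, IsConjugation C ∧ ∀ x, T x = C (adjoint T (C x))

def approxSpec {H : Type*} [NormedAddCommGroup H] [InnerProductSpace ℂ H]
    (T : H →L[ℂ] H) : Set ℂ :=
  {lam | ∀ ε > (0:ℝ), ∃ x : H, ‖x‖ = 1 ∧ ‖T x - lam • x‖ < ε}

section Aux
variable {H : Type*} [NormedAddCommGroup H] [InnerProductSpace ℂ H] [CompleteSpace H]

lemma IsConjugation.map_sub {C : H → H} (hC : IsConjugation C) (a b : H) :
    C (a - b) = C a - C b := by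
  obtain ⟨hadd, hsmul, _, _⟩ := hC
  have hneg : ∀ b, C (-b) = -C b := fun b => by
    have := hsmul (-1) b; simpa using this
  rw [sub_eq_add_neg, hadd, hneg, sub_eq_add_neg]

lemma cso_key1 {T : H →L[ℂ] H} {C : H → H} (hC : IsConjugation C)
    (hT : ∀ x, T x = C (adjoint T (C x))) (lam : ℂ) (z : H) :
    ‖adjoint T (C z) - (starRingEnd ℂ) lam • C z‖ = ‖T z - lam • z‖ := by
  have hsmul := hC.2.1
  have hnorm := hC.2.2.1
  have hinv := hC.2.2.2
  have h1 : C (adjoint T (C z) - (starRingEnd ℂ) lam • C z) = T z - lam • z := by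
    rw [hC.map_sub, hsmul, ← hT, hinv]
    simp
  rw [← hnorm, h1]

lemma cso_key2 {T : H →L[ℂ] H} {C : H → H} (hC : IsConjugation C)
    (hT : ∀ x, T x = C (adjoint T (C x))) (lam : ℂ) (z : H) :
    ‖T (C z) - (starRingEnd ℂ) lam • C z‖ = ‖adjoint T z - lam • z‖ := by
  have hsmul := hC.2.1
  have hnorm := hC.2.2.1
  have hinv := hC.2.2.2
  have hT' : T (C z) = C (adjoint T z) := by rw [hT (C z), hinv]
  have h1 : C (adjoint T z - lam • z) = T (C z) - (starRingEnd ℂ) lam • C z := by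
    rw [hC.map_sub, hsmul, hT']
  rw [← h1, hnorm]

lemma approx_symm {T : H →L[ℂ] H} {Tseq : ℕ → (H →L[ℂ] H)}
    (hcso : ∀ n, IsCSO (Tseq n)) (htend : Tendsto Tseq atTop (𝓝 T))
    {lam : ℂ} (hlam : lam ∈ approxSpec T) :
    (starRingEnd ℂ) lam ∈ approxSpec (adjoint T) := by
  intro ε hε
  have h4 : (0:ℝ) < ε / 4 := by linarith
  obtain ⟨N, hN⟩ := (Metric.tendsto_atTop.mp htend) (ε / 4) h4
  have hd : ‖Tseq N - T‖ < ε / 4 := by rw [← dist_eq_norm]; exact hN N le_rfl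
  obtain ⟨x, hx1, hx2⟩ := hlam (ε / 4) h4
  obtain ⟨C, hC, hTC⟩ := hcso N
  refine ⟨C x, by rw [hC.2.2.1, hx1], ?_⟩
  have key : ‖adjoint (Tseq N) (C x) - (starRingEnd ℂ) lam • C x‖
      = ‖Tseq N x - lam • x‖ := cso_key1 hC hTC lam x
  have hd' : ‖adjoint T - adjoint (Tseq N)‖ < ε / 4 := by
    rw [← map_sub (ContinuousLinearMap.adjoint (𝕜 := ℂ) (E := H) (F := H)),
      LinearIsometryEquiv.norm_map, norm_sub_rev]
    exact hd
  have hb1 : ‖adjoint T (C x) - adjoint (Tseq N) (C x)‖ < ε / 4 := by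
    have := (adjoint T - adjoint (Tseq N)).le_opNorm (C x)
    rw [sub_apply] at this
    calc ‖adjoint T (C x) - adjoint (Tseq N) (C x)‖
        ≤ ‖adjoint T - adjoint (Tseq N)‖ * ‖C x‖ := this
      _ = ‖adjoint T - adjoint (Tseq N)‖ := by rw [hC.2.2.1, hx1, mul_one]
      _ < ε / 4 := hd'
  have hb2 : ‖Tseq N x - lam • x‖ < ε / 4 + ε / 4 := by
    have h1 : ‖Tseq N x - T x‖ < ε / 4 := by
      have := (Tseq N - T).le_opNorm x
      rw [sub_apply] at this
      calc ‖Tseq N x - T x‖ ≤ ‖Tseq N - T‖ * ‖x‖ := this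
        _ = ‖Tseq N - T‖ := by rw [hx1, mul_one]
        _ < ε / 4 := hd
    calc ‖Tseq N x - lam • x‖
        ≤ ‖Tseq N x - T x‖ + ‖T x - lam • x‖ := by
          simpa using norm_sub_le_norm_sub_add_norm_sub (Tseq N x) (T x) (lam • x)
      _ < ε / 4 + ε / 4 := by linarith
  calc ‖adjoint T (C x) - (starRingEnd ℂ) lam • C x‖
      ≤ ‖adjoint T (C x) - adjoint (Tseq N) (C x)‖
        + ‖adjoint (Tseq N) (C x) - (starRingEnd ℂ) lam • C x‖ := by
        simpa using norm_sub_le_norm_sub_add_norm_sub (adjoint T (C x))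
          (adjoint (Tseq N) (C x)) ((starRingEnd ℂ) lam • C x)
    _ = ‖adjoint T (C x) - adjoint (Tseq N) (C x)‖ + ‖Tseq N x - lam • x‖ := by rw [key]
    _ < ε / 4 + (ε / 4 + ε / 4) := by linarith
    _ < ε := by linarith

lemma approx_symm' {T : H →L[ℂ] H} {Tseq : ℕ → (H →L[ℂ] H)}
    (hcso : ∀ n, IsCSO (Tseq n)) (htend : Tendsto Tseq atTop (𝓝 T))
    {lam : ℂ} (hlam : lam ∈ approxSpec (adjoint T)) :
    (starRingEnd ℂ) lam ∈ approxSpec T := by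
  intro ε hε
  have h4 : (0:ℝ) < ε / 4 := by linarith
  obtain ⟨N, hN⟩ := (Metric.tendsto_atTop.mp htend) (ε / 4) h4
  have hd : ‖Tseq N - T‖ < ε / 4 := by rw [← dist_eq_norm]; exact hN N le_rfl
  obtain ⟨x, hx1, hx2⟩ := hlam (ε / 4) h4
  obtain ⟨C, hC, hTC⟩ := hcso N
  refine ⟨C x, by rw [hC.2.2.1, hx1], ?_⟩
  have key : ‖Tseq N (C x) - (starRingEnd ℂ) lam • C x‖
      = ‖adjoint (Tseq N) x - lam • x‖ := cso_key2 hC hTC lam x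
  have hd' : ‖adjoint (Tseq N) - adjoint T‖ < ε / 4 := by
    rw [← map_sub (ContinuousLinearMap.adjoint (𝕜 := ℂ) (E := H) (F := H)),
      LinearIsometryEquiv.norm_map]
    exact hd
  have hb2 : ‖adjoint (Tseq N) x - lam • x‖ < ε / 4 + ε / 4 := by
    have h1 : ‖adjoint (Tseq N) x - adjoint T x‖ < ε / 4 := by
      have := (adjoint (Tseq N) - adjoint T).le_opNorm x
      rw [sub_apply] at this
      calc ‖adjoint (Tseq N) x - adjoint T x‖
          ≤ ‖adjoint (Tseq N) - adjoint T‖ * ‖x‖ := this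
        _ = ‖adjoint (Tseq N) - adjoint T‖ := by rw [hx1, mul_one]
        _ < ε / 4 := hd'
    calc ‖adjoint (Tseq N) x - lam • x‖
        ≤ ‖adjoint (Tseq N) x - adjoint T x‖ + ‖adjoint T x - lam • x‖ := by
          simpa using norm_sub_le_norm_sub_add_norm_sub (adjoint (Tseq N) x)
            (adjoint T x) (lam • x)
      _ < ε / 4 + ε / 4 := by linarith
  have hb1 : ‖T (C x) - Tseq N (C x)‖ < ε / 4 := by
    have := (T - Tseq N).le_opNorm (C x)
    rw [sub_apply] at this
    calc ‖T (C x) - Tseq N (C x)‖ ≤ ‖T - Tseq N‖ * ‖C x‖ := this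
      _ = ‖T - Tseq N‖ := by rw [hC.2.2.1, hx1, mul_one]
      _ < ε / 4 := by rw [norm_sub_rev]; exact hd
  calc ‖T (C x) - (starRingEnd ℂ) lam • C x‖
      ≤ ‖T (C x) - Tseq N (C x)‖ + ‖Tseq N (C x) - (starRingEnd ℂ) lam • C x‖ := by
        simpa using norm_sub_le_norm_sub_add_norm_sub (T (C x)) (Tseq N (C x))
          ((starRingEnd ℂ) lam • C x)
    _ = ‖T (C x) - Tseq N (C x)‖ + ‖adjoint (Tseq N) x - lam • x‖ := by rw [key]
    _ < ε / 4 + (ε / 4 + ε / 4) := by linarith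
    _ < ε := by linarith

lemma bdd_below_of_not_approx {T : H →L[ℂ] H} {lam : ℂ} (h : lam ∉ approxSpec T) :
    ∃ ε > (0:ℝ), ∀ z : H, ε * ‖z‖ ≤ ‖T z - lam • z‖ := by
  simp only [approxSpec, Set.mem_setOf_eq] at h
  push_neg at h
  obtain ⟨ε, hε, hb⟩ := h
  refine ⟨ε, hε, fun z => ?_⟩
  rcases eq_or_ne z 0 with rfl | hz
  · simp
  · have hzn : (0:ℝ) < ‖z‖ := norm_pos_iff.mpr hz
    set c : ℂ := ((‖z‖⁻¹ : ℝ) : ℂ) with hc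
    have hcn : ‖c‖ = ‖z‖⁻¹ := by
      rw [hc, Complex.norm_real, norm_inv, norm_norm]
    have hx : ‖c • z‖ = 1 := by
      rw [norm_smul, hcn]; field_simp
    have hle := hb _ hx
    have heq : T (c • z) - lam • (c • z) = c • (T z - lam • z) := by
      rw [map_smul, smul_sub, smul_comm]
    rw [heq, norm_smul, hcn] at hle
    calc ε * ‖z‖ ≤ (‖z‖⁻¹ * ‖T z - lam • z‖) * ‖z‖ :=
          mul_le_mul_of_nonneg_right hle (norm_nonneg z)
      _ = ‖T z - lam • z‖ := by field_simp
end Aux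

/-- For a norm limit of complex symmetric operators,
`σ_ap(T) = conj(σ_ap(T*))` and `σ(T) = σ_ap(T)`. -/
theorem spectra_of_norm_limit_CSO {H : Type*} [NormedAddCommGroup H]
    [InnerProductSpace ℂ H] [CompleteSpace H] [Nontrivial H]
    (T : H →L[ℂ] H)
    (hlim : ∃ Tseq : ℕ → (H →L[ℂ] H), (∀ n, IsCSO (Tseq n)) ∧
      Tendsto Tseq atTop (𝓝 T)) :
    approxSpec T = (starRingEnd ℂ) '' approxSpec (adjoint T) ∧
    spectrum ℂ T = approxSpec T := by
  obtain ⟨Tseq, hcso, htend⟩ := hlim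
  have hpart1 : approxSpec T = (starRingEnd ℂ) '' approxSpec (adjoint T) := by
    ext lam
    constructor
    · intro h
      exact ⟨(starRingEnd ℂ) lam, approx_symm hcso htend h, by simp⟩
    · rintro ⟨mu, hmu, rfl⟩
      exact approx_symm' hcso htend hmu
  refine ⟨hpart1, ?_⟩
  apply Set.eq_of_subset_of_subset
  · -- spectrum ⊆ approxSpec
    intro lam hsp
    by_contra hap
    have hap' : (starRingEnd ℂ) lam ∉ approxSpec (adjoint T) := by
      intro hmem
      exact hap (hpart1 ▸ ⟨(starRingEnd ℂ) lam, hmem, by simp⟩)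
    obtain ⟨ε, hε, hb⟩ := bdd_below_of_not_approx hap
    obtain ⟨δ, hδ, hb'⟩ := bdd_below_of_not_approx hap'
    set A : H →L[ℂ] H := algebraMap ℂ (H →L[ℂ] H) lam - T with hA
    have hAapp : ∀ z, A z = lam • z - T z := fun z => by
      simp [hA, Algebra.algebraMap_eq_smul_one, sub_apply, smul_apply, one_apply]
    have hAnorm : ∀ z, ‖A z‖ = ‖T z - lam • z‖ := fun z => by
      rw [hAapp, norm_sub_rev]
    have hAadj : ∀ z, adjoint A z = (starRingEnd ℂ) lam • z - adjoint T z := by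
      intro z
      have : adjoint A = algebraMap ℂ (H →L[ℂ] H) ((starRingEnd ℂ) lam) - adjoint T := by
        rw [hA, map_sub]
        congr 1
        rw [Algebra.algebraMap_eq_smul_one, Algebra.algebraMap_eq_smul_one]
        rw [LinearIsometryEquiv.map_smulₛₗ]
        congr 1
        exact adjoint_id
      rw [this]
      simp [Algebra.algebraMap_eq_smul_one, sub_apply, smul_apply, one_apply]
    have hanti : AntilipschitzWith (Real.toNNReal ε⁻¹) A := by
      apply A.antilipschitz_of_bound
      intro x
      rw [Real.coe_toNNReal _ (by positivity)]
      have h := hb x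
      rw [← hAnorm] at h
      calc ‖x‖ = ε⁻¹ * (ε * ‖x‖) := by field_simp
        _ ≤ ε⁻¹ * ‖A x‖ := mul_le_mul_of_nonneg_left h (by positivity)
    have hdense : A.range.topologicalClosure = ⊤ := by
      rw [Submodule.topologicalClosure_eq_top_iff]
      rw [Submodule.eq_bot_iff]
      intro y hy
      have hAy : adjoint A y = 0 := by
        have horth : ∀ x : H, inner ℂ (A x) y = (0:ℂ) := fun x =>
          (Submodule.mem_orthogonal _ y).mp hy (A x) (LinearMap.mem_range_self _ x)
        have : (inner ℂ (adjoint A y) (adjoint A y) : ℂ) = 0 := by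
          rw [adjoint_inner_left, ← inner_conj_symm, horth, map_zero]
        exact inner_self_eq_zero.mp this
      have := hb' y
      rw [← norm_sub_rev, ← hAadj, hAy, norm_zero] at this
      have : ‖y‖ ≤ 0 := by nlinarith
      exact norm_le_zero_iff.mp this
    have hbij : Function.Bijective A := by
      rw [ContinuousLinearMap.bijective_iff_dense_range_and_antilipschitz]
      exact ⟨hdense, _, hanti⟩
    exact (spectrum.mem_iff.mp hsp) (ContinuousLinearMap.isUnit_iff_bijective.mpr hbij)
  · -- approxSpec ⊆ spectrum
    intro lam hlam
    by_contra hsp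
    rw [spectrum.notMem_iff] at hsp
    obtain ⟨u, hu⟩ := hsp
    set v : H →L[ℂ] H := (↑u⁻¹ : H →L[ℂ] H) with hv
    obtain ⟨x, hx1, hx2⟩ := hlam (‖v‖ + 1)⁻¹ (by positivity)
    have hux : (↑u : H →L[ℂ] H) x = lam • x - T x := by
      rw [hu]
      simp [Algebra.algebraMap_eq_smul_one, sub_apply, smul_apply, one_apply]
    have hxeq : v ((↑u : H →L[ℂ] H) x) = x := by
      have : (v * (↑u : H →L[ℂ] H)) x = (1 : H →L[ℂ] H) x := by rw [hv, u.inv_mul]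
      simpa [mul_apply] using this
    have h1 : (1:ℝ) = ‖v ((↑u : H →L[ℂ] H) x)‖ := by rw [hxeq, hx1]
    have h2 : ‖v ((↑u : H →L[ℂ] H) x)‖ ≤ ‖v‖ * ‖(↑u : H →L[ℂ] H) x‖ := v.le_opNorm _
    have h3 : ‖(↑u : H →L[ℂ] H) x‖ < (‖v‖ + 1)⁻¹ := by
      rw [hux, norm_sub_rev]; exact hx2
    have hv0 : (0:ℝ) ≤ ‖v‖ := norm_nonneg _
    have hvpos : (0:ℝ) < ‖v‖ + 1 := by linarith
    have hfin : ‖v‖ * ‖(↑u : H →L[ℂ] H) x‖ < 1 := by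
      calc ‖v‖ * ‖(↑u : H →L[ℂ] H) x‖
          ≤ (‖v‖ + 1) * ‖(↑u : H →L[ℂ] H) x‖ :=
            mul_le_mul_of_nonneg_right (by linarith) (norm_nonneg _)
        _ < (‖v‖ + 1) * (‖v‖ + 1)⁻¹ := by
            exact mul_lt_mul_of_pos_left h3 hvpos
        _ = 1 := mul_inv_cancel₀ (ne_of_gt hvpos)
    linarith [h1 ▸ h2]
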